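/- arXiv:2507.19918 — 4 statements merged into one kernel-verified Lean document; each statement's English description precedes it below -/
import Mathlib

section
/- For any square complex matrix A and any unit vector x, equality |x*Ax|² = ‖Ax‖² holds if and only if x is an eigenvector of A. Consequently, DW(A) ∩ {(z,ν) : |z|² = ν} = {(λ, |λ|²) : λ an eigenvalue of A}. -/
open Matrix

noncomputable def dwShell {n : ℕ} (A : Matrix (Fin n) (Fin n) ℂ) : Set (ℂ × ℝ) :=
  {p | ∃ x : EuclideanSpace ℂ (Fin n), ‖x‖ = 1 ∧
    p = ((inner ℂ x (Matrix.toEuclideanLin A x) : ℂ), ‖Matrix.toEuclideanLin A x‖ ^ 2)}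

lemma aux_part1 {n : ℕ} (A : Matrix (Fin n) (Fin n) ℂ)
    (x : EuclideanSpace ℂ (Fin n)) (hx : ‖x‖ = 1) :
    ‖(inner ℂ x (Matrix.toEuclideanLin A x) : ℂ)‖ ^ 2 =
        ‖Matrix.toEuclideanLin A x‖ ^ 2 ↔
      ∃ μ : ℂ, Matrix.toEuclideanLin A x = μ • x := by
  have hx0 : x ≠ 0 := by intro h; rw [h, norm_zero] at hx; norm_num at hx
  have hinner : ∀ μ : ℂ, (inner ℂ x (μ • x) : ℂ) = μ := by
    intro μ
    rw [inner_smul_right, @inner_self_eq_norm_sq_to_K ℂ, hx]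
    norm_num
  have hnormsmul : ∀ μ : ℂ, ‖μ • x‖ = ‖μ‖ := by
    intro μ; rw [norm_smul, hx, mul_one]
  constructor
  · intro h
    rcases eq_or_ne (Matrix.toEuclideanLin A x) 0 with h0 | h0
    · exact ⟨0, by simp [h0]⟩
    · have hnorm : ‖(inner ℂ x (Matrix.toEuclideanLin A x) : ℂ)‖ =
          ‖x‖ * ‖Matrix.toEuclideanLin A x‖ := by
        rw [hx, one_mul]
        have h' : ‖(inner ℂ x (Matrix.toEuclideanLin A x) : ℂ)‖ ^ 2 =
            ‖Matrix.toEuclideanLin A x‖ ^ 2 := h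
        nlinarith [norm_nonneg (inner ℂ x (Matrix.toEuclideanLin A x) : ℂ),
          norm_nonneg (Matrix.toEuclideanLin A x)]
      obtain ⟨r, _, hr⟩ := (norm_inner_eq_norm_iff hx0 h0).1 hnorm
      exact ⟨r, hr⟩
  · rintro ⟨μ, hμ⟩
    rw [hμ, hinner, hnormsmul]

lemma aux_spec {n : ℕ} (A : Matrix (Fin n) (Fin n) ℂ) :
    spectrum ℂ (Matrix.toEuclideanLin A) = spectrum ℂ A :=
  AlgEquiv.spectrum_eq (Matrix.toLinAlgEquiv (PiLp.basisFun 2 ℂ (Fin n))) A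

/-- Equality |x*Ax|² = ‖Ax‖² holds iff x is an eigenvector of A; consequently
DW(A) ∩ {(z,ν) : |z|² = ν} = {(λ,|λ|²) : λ ∈ Λ(A)}. -/
theorem stmt1 {n : ℕ} (A : Matrix (Fin n) (Fin n) ℂ) :
    (∀ x : EuclideanSpace ℂ (Fin n), ‖x‖ = 1 →
      (‖(inner ℂ x (Matrix.toEuclideanLin A x) : ℂ)‖ ^ 2 =
          ‖Matrix.toEuclideanLin A x‖ ^ 2 ↔
        ∃ μ : ℂ, Matrix.toEuclideanLin A x = μ • x)) ∧
    dwShell A ∩ {p : ℂ × ℝ | ‖p.1‖ ^ 2 = p.2} =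
      {p : ℂ × ℝ | ∃ μ ∈ spectrum ℂ A, p = (μ, ‖μ‖ ^ 2)} := by
  refine ⟨aux_part1 A, ?_⟩
  ext p
  simp only [dwShell, Set.mem_inter_iff, Set.mem_setOf_eq]
  constructor
  · rintro ⟨⟨x, hx, rfl⟩, hpar⟩
    simp only at hpar
    obtain ⟨μ, hμ⟩ := (aux_part1 A x hx).1 hpar
    have hx0 : x ≠ 0 := by intro h; rw [h, norm_zero] at hx; norm_num at hx
    have hev : Module.End.HasEigenvalue (Matrix.toEuclideanLin A) μ :=
      Module.End.hasEigenvalue_of_hasEigenvector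
        ⟨Module.End.mem_eigenspace_iff.2 hμ, hx0⟩
    refine ⟨μ, ?_, ?_⟩
    · rw [← aux_spec A]
      exact Module.End.hasEigenvalue_iff_mem_spectrum.1 hev
    · have h1 : (inner ℂ x (Matrix.toEuclideanLin A x) : ℂ) = μ := by
        rw [hμ, inner_smul_right, @inner_self_eq_norm_sq_to_K ℂ, hx]
        norm_num
      have h2 : ‖Matrix.toEuclideanLin A x‖ = ‖μ‖ := by
        rw [hμ, norm_smul, hx, mul_one]
      rw [h1, h2]
  · rintro ⟨μ, hμ, rfl⟩
    rw [← aux_spec A] at hμ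
    obtain ⟨y, hy⟩ := (Module.End.hasEigenvalue_iff_mem_spectrum.2 hμ).exists_hasEigenvector
    set x : EuclideanSpace ℂ (Fin n) := ‖y‖⁻¹ • y with hxdef
    have hy0 : y ≠ 0 := hy.right
    have hyn : ‖y‖ ≠ 0 := norm_ne_zero_iff.2 hy0
    have hx : ‖x‖ = 1 := by
      rw [hxdef, norm_smul, norm_inv, norm_norm, inv_mul_cancel₀ hyn]
    have hTx : Matrix.toEuclideanLin A x = μ • x := by
      rw [hxdef, LinearMap.map_smul_of_tower, hy.apply_eq_smul, smul_comm]
    have h1 : (inner ℂ x (Matrix.toEuclideanLin A x) : ℂ) = μ := by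
      rw [hTx, inner_smul_right, @inner_self_eq_norm_sq_to_K ℂ, hx]
      norm_num
    have h2 : ‖Matrix.toEuclideanLin A x‖ = ‖μ‖ := by
      rw [hTx, norm_smul, hx, mul_one]
    refine ⟨⟨x, hx, ?_⟩, ?_⟩
    · rw [h1, h2]
    · simp [h1, h2]
end

section
/- If A ∈ ℂ^{n×n} is invertible, then DW(A⁻¹) is the image of DW(A) under the map f_inv(z,ν) := (conj(z)/ν, 1/ν). (Note that for invertible A, every point (z,ν) ∈ DW(A) has ν = ‖Ax‖² > 0.) -/
open Matrix

noncomputable def finv (p : ℂ × ℝ) : ℂ × ℝ :=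
  ((starRingEnd ℂ p.1) / (p.2 : ℂ), 1 / p.2)

lemma cancel {n : ℕ} (A : Matrix (Fin n) (Fin n) ℂ) (hA : IsUnit A)
    (x : EuclideanSpace ℂ (Fin n)) :
    Matrix.toEuclideanLin A⁻¹ (Matrix.toEuclideanLin A x) = x := by
  simp [Matrix.toEuclideanLin_apply, Matrix.mulVec_mulVec,
    Matrix.nonsing_inv_mul A ((Matrix.isUnit_iff_isUnit_det A).mp hA)]

lemma aux {n : ℕ} (A : Matrix (Fin n) (Fin n) ℂ) (hA : IsUnit A)
    (x : EuclideanSpace ℂ (Fin n)) (hx : ‖x‖ = 1) :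
    ∃ y : EuclideanSpace ℂ (Fin n), ‖Matrix.toEuclideanLin A x‖ ≠ 0 ∧ ‖y‖ = 1 ∧
      (inner ℂ y (Matrix.toEuclideanLin A⁻¹ y) : ℂ)
        = (starRingEnd ℂ (inner ℂ x (Matrix.toEuclideanLin A x) : ℂ)) / ((‖Matrix.toEuclideanLin A x‖ ^ 2 : ℝ) : ℂ) ∧
      ‖Matrix.toEuclideanLin A⁻¹ y‖ ^ 2 = 1 / ‖Matrix.toEuclideanLin A x‖ ^ 2 := by
  set w : EuclideanSpace ℂ (Fin n) := Matrix.toEuclideanLin A x with hw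
  have hcan : Matrix.toEuclideanLin A⁻¹ w = x := cancel A hA x
  have hw0 : w ≠ 0 := by
    intro h
    rw [h, map_zero] at hcan
    rw [← hcan] at hx
    simp at hx
  have hn : ‖w‖ ≠ 0 := norm_ne_zero_iff.mpr hw0
  set c : ℂ := ((‖w‖ : ℝ) : ℂ)⁻¹ with hc
  have hcn : ‖c‖ = ‖w‖⁻¹ := by simp [hc]
  refine ⟨c • w, hn, ?_, ?_, ?_⟩
  · rw [norm_smul, hcn, inv_mul_cancel₀ hn]
  · rw [_root_.map_smul, hcan, inner_smul_left, inner_smul_right]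
    have : (inner ℂ w x : ℂ) = starRingEnd ℂ (inner ℂ x w) := (inner_conj_symm w x).symm
    rw [this]
    have hcc : starRingEnd ℂ c * c = ((‖w‖^2 : ℝ) : ℂ)⁻¹ := by
      simp [hc, ← Complex.ofReal_inv]
      push_cast
      ring
    rw [← mul_assoc, hcc]
    rw [div_eq_mul_inv, mul_comm]
  · rw [_root_.map_smul, hcan, norm_smul, hcn, mul_pow]
    field_simp [hx]
    rw [hx]; norm_num

/-- For invertible A, DW(A⁻¹) = f_inv(DW(A)). -/
theorem stmt7 {n : ℕ} (A : Matrix (Fin n) (Fin n) ℂ) (hA : IsUnit A) :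
    dwShell A⁻¹ = finv '' dwShell A := by
  have hdet : IsUnit A.det := (Matrix.isUnit_iff_isUnit_det A).mp hA
  have hAinv : IsUnit A⁻¹ := Matrix.isUnit_nonsing_inv_iff.mpr hA
  ext p
  constructor
  · rintro ⟨y, hy, rfl⟩
    obtain ⟨x, hn, hx1, h1, h2⟩ := aux A⁻¹ hAinv y hy
    rw [Matrix.nonsing_inv_nonsing_inv A hdet] at h1 h2
    refine ⟨((inner ℂ x (Matrix.toEuclideanLin A x) : ℂ), ‖Matrix.toEuclideanLin A x‖ ^ 2),
      ⟨x, hx1, rfl⟩, ?_⟩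
    set z : ℂ := (inner ℂ y (Matrix.toEuclideanLin A⁻¹ y) : ℂ)
    set ν : ℝ := ‖Matrix.toEuclideanLin A⁻¹ y‖ ^ 2
    have hν : ν ≠ 0 := pow_ne_zero 2 hn
    have hνc : (ν : ℂ) ≠ 0 := by exact_mod_cast hν
    rw [finv, h1, h2]
    refine Prod.ext ?_ ?_
    · simp only [map_div₀, Complex.conj_conj, Complex.conj_ofReal]
      push_cast
      field_simp
    · simp only []
      field_simp
  · rintro ⟨q, ⟨x, hx, rfl⟩, rfl⟩
    obtain ⟨y, hn, hy1, h1, h2⟩ := aux A hA x hx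
    exact ⟨y, hy1, by rw [finv, h1, h2]⟩
end

section
/- Given A, B ∈ ℂ^{n×n}, if there exists a unitary U such that I + A U* B U is singular, then the inverse DW shell of A intersects DW(−B); i.e., there exists (w,μ) ∈ ℂ × ℝ₊ lying in both f_inv(DW(A) \ {(0,0)}) and DW(−B). -/
open Matrix

noncomputable def invDwShell {n : ℕ} (A : Matrix (Fin n) (Fin n) ℂ) : Set (ℂ × ℝ) :=
  finv '' (dwShell A \ {((0 : ℂ), (0 : ℝ))})

noncomputable def ev {n : ℕ} (v : Fin n → ℂ) : EuclideanSpace ℂ (Fin n) :=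
  (WithLp.equiv 2 (Fin n → ℂ)).symm v

lemma inner_ev {n : ℕ} (v w : Fin n → ℂ) :
    (inner ℂ (ev v) (ev w) : ℂ) = dotProduct (star v) w :=
  (EuclideanSpace.inner_toLp_toLp v w).trans (dotProduct_comm _ _)

lemma tEL_ev {n : ℕ} (M : Matrix (Fin n) (Fin n) ℂ) (v : Fin n → ℂ) :
    Matrix.toEuclideanLin M (ev v) = ev (M *ᵥ v) :=
  Matrix.toEuclideanLin_apply_piLp_toLp M v

lemma ev_smul {n : ℕ} (c : ℂ) (v : Fin n → ℂ) : ev (c • v) = c • ev v :=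
  WithLp.toLp_smul 2 c v

lemma ev_neg {n : ℕ} (v : Fin n → ℂ) : ev (-v) = -ev v :=
  WithLp.toLp_neg 2 v

lemma ev_ne_zero {n : ℕ} {v : Fin n → ℂ} (hv : v ≠ 0) : ev v ≠ 0 := by
  intro h
  apply hv
  have := (WithLp.equiv 2 (Fin n → ℂ)).symm.injective (by simpa [ev] using h)
  simpa using this

lemma norm_ev_mulVec {n : ℕ} (M : Matrix (Fin n) (Fin n) ℂ) (hM : Mᴴ * M = 1)
    (v : Fin n → ℂ) : ‖ev (M *ᵥ v)‖ = ‖ev v‖ := by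
  have hinner : (inner ℂ (ev (M *ᵥ v)) (ev (M *ᵥ v)) : ℂ) = inner ℂ (ev v) (ev v) := by
    rw [inner_ev, inner_ev, star_mulVec, dotProduct_mulVec, vecMul_vecMul, hM, vecMul_one]
  have h3 : ‖ev (M *ᵥ v)‖ ^ 2 = ‖ev v‖ ^ 2 := by
    rw [← @inner_self_eq_norm_sq ℂ, ← @inner_self_eq_norm_sq ℂ, hinner]
  have := Real.sqrt_sq (norm_nonneg (ev (M *ᵥ v)))
  rw [← this, h3, Real.sqrt_sq (norm_nonneg _)]

/-- If I + AU*BU is singular for some unitary U, then DW⁻¹(A) intersects DW(−B). -/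
theorem stmt8 {n : ℕ} (A B : Matrix (Fin n) (Fin n) ℂ)
    (h : ∃ U : Matrix (Fin n) (Fin n) ℂ, Uᴴ * U = 1 ∧ ¬ IsUnit (1 + A * Uᴴ * B * U)) :
    ∃ p : ℂ × ℝ, 0 < p.2 ∧ p ∈ invDwShell A ∧ p ∈ dwShell (-B) := by
  obtain ⟨U, hU, hsing⟩ := h
  have hdet : (1 + A * Uᴴ * B * U).det = 0 := by
    by_contra hd
    exact hsing ((Matrix.isUnit_iff_isUnit_det _).2 (Ne.isUnit hd))
  obtain ⟨y₀, hy₀ne, hy₀⟩ := (Matrix.exists_mulVec_eq_zero_iff).2 hdet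
  -- normalize y₀
  have hny₀ : ‖ev y₀‖ ≠ 0 := norm_ne_zero_iff.2 (ev_ne_zero hy₀ne)
  set c : ℂ := ((‖ev y₀‖ : ℝ) : ℂ)⁻¹ with hc
  set y : Fin n → ℂ := c • y₀ with hydef
  have hy : (1 + A * Uᴴ * B * U) *ᵥ y = 0 := by
    rw [hydef, mulVec_smul, hy₀, smul_zero]
  have hny : ‖ev y‖ = 1 := by
    rw [hydef, ev_smul, norm_smul, hc]
    simp only [norm_inv, Complex.norm_real, Real.norm_eq_abs,
      abs_of_nonneg (norm_nonneg _)]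
    exact inv_mul_cancel₀ hny₀
  set z : Fin n → ℂ := (Uᴴ * B * U) *ᵥ y with hzdef
  have hAz : A *ᵥ z = -y := by
    have h1 : y + A *ᵥ z = 0 := by
      have h2 := hy
      rw [add_mulVec, one_mulVec] at h2
      rw [hzdef, mulVec_mulVec]
      convert h2 using 2
      rw [← Matrix.mul_assoc, ← Matrix.mul_assoc]
    exact eq_neg_of_add_eq_zero_right h1
  have hyne : y ≠ 0 := by
    intro h0
    rw [h0] at hny
    simp [ev] at hny
  have hzne : z ≠ 0 := by
    intro h0
    rw [h0] at hAz
    simp at hAz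
    exact hyne hAz
  set r : ℝ := ‖ev z‖ with hrdef
  have hr : 0 < r := norm_pos_iff.2 (ev_ne_zero hzne)
  have hrne : (r : ℂ) ≠ 0 := by exact_mod_cast hr.ne'
  -- the witness vector for dwShell A
  set xv : Fin n → ℂ := ((r : ℂ))⁻¹ • z with hxv
  have hxnorm : ‖ev xv‖ = 1 := by
    rw [hxv, ev_smul, norm_smul]
    simp only [norm_inv, Complex.norm_real, Real.norm_eq_abs, abs_of_nonneg hr.le]
    exact inv_mul_cancel₀ hr.ne'
  have hAxv : A *ᵥ xv = ((r : ℂ))⁻¹ • (-y) := by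
    rw [hxv, mulVec_smul, hAz]
  -- first coordinate of q
  have hq1 : (inner ℂ (ev xv) (Matrix.toEuclideanLin A (ev xv)) : ℂ)
      = -(((r : ℂ))⁻¹ * ((r : ℂ))⁻¹ * dotProduct (star z) y) := by
    rw [tEL_ev, hAxv, hxv, inner_ev]
    simp only [star_smul, smul_dotProduct, dotProduct_smul, dotProduct_neg, smul_eq_mul,
      star_inv₀, Complex.star_def, Complex.conj_ofReal]
    ring
  have hq2 : ‖Matrix.toEuclideanLin A (ev xv)‖ ^ 2 = (r⁻¹) ^ 2 := by
    rw [tEL_ev, hAxv, ev_smul, norm_smul, ev_neg, norm_neg, hny]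
    simp only [norm_inv, Complex.norm_real, Real.norm_eq_abs, abs_of_nonneg hr.le]
    ring
  -- target point
  refine ⟨(-(dotProduct (star y) z), r ^ 2), by positivity, ?_, ?_⟩
  · -- membership in invDwShell A
    refine ⟨((inner ℂ (ev xv) (Matrix.toEuclideanLin A (ev xv)) : ℂ),
        ‖Matrix.toEuclideanLin A (ev xv)‖ ^ 2), ⟨⟨ev xv, hxnorm, rfl⟩, ?_⟩, ?_⟩
    · intro hmem
      have h2 : ‖Matrix.toEuclideanLin A (ev xv)‖ ^ 2 = 0 := by
        simpa using congrArg Prod.snd (Set.mem_singleton_iff.1 hmem)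
      rw [hq2] at h2
      exact (pow_ne_zero 2 (inv_ne_zero hr.ne')) h2
    · unfold finv
      rw [hq1, hq2]
      have hconj : (starRingEnd ℂ) (dotProduct (star z) y)
          = dotProduct (star y) z := by
        rw [star_dotProduct z y]
        simp
      refine Prod.ext ?_ ?_
      · dsimp only
        simp only [map_neg, _root_.map_mul, hconj, map_inv₀, Complex.conj_ofReal]
        push_cast
        field_simp
      · dsimp only
        rw [one_div, ← inv_pow, inv_inv]
  · -- membership in dwShell (-B)
    have hUU : (Uᴴ)ᴴ * Uᴴ = 1 := by
      rw [conjTranspose_conjTranspose]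
      exact mul_eq_one_comm.1 hU
    have hz' : z = Uᴴ *ᵥ (B *ᵥ (U *ᵥ y)) := by
      rw [hzdef, mulVec_mulVec, mulVec_mulVec]
    refine ⟨ev (U *ᵥ y), ?_, ?_⟩
    · rw [norm_ev_mulVec U hU y, hny]
    · refine Prod.ext ?_ ?_
      · show -(dotProduct (star y) z) = _
        rw [tEL_ev, inner_ev, neg_mulVec, dotProduct_neg]
        congr 1
        rw [hz', dotProduct_mulVec, ← star_mulVec]
      · show r ^ 2 = ‖Matrix.toEuclideanLin (-B) (ev (U *ᵥ y))‖ ^ 2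
        rw [tEL_ev, neg_mulVec, ev_neg, norm_neg,
          ← norm_ev_mulVec Uᴴ hUU (B *ᵥ (U *ᵥ y)), ← hz', ← hrdef]
end

section
/- Given A, B ∈ ℂ^{n×n}, if DW⁻¹(A) ∩ DW(−B) ≠ ∅, then there exists a unitary matrix U such that I + A U* B U is singular. -/
open Matrix

open LinearMap in
open scoped InnerProductSpace in
lemma gram_extend {E : Type*} [NormedAddCommGroup E] [InnerProductSpace ℂ E]
    [FiniteDimensional ℂ E] (u₁ u₂ v₁ v₂ : E)
    (h11 : ⟪v₁, v₁⟫_ℂ = ⟪u₁, u₁⟫_ℂ) (h12 : ⟪v₁, v₂⟫_ℂ = ⟪u₁, u₂⟫_ℂ)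
    (h22 : ⟪v₂, v₂⟫_ℂ = ⟪u₂, u₂⟫_ℂ) :
    ∃ U : E →ₗᵢ[ℂ] E, U u₁ = v₁ ∧ U u₂ = v₂ := by
  classical
  have h21 : ⟪v₂, v₁⟫_ℂ = ⟪u₂, u₁⟫_ℂ := by
    have := congrArg (starRingEnd ℂ) h12
    simpa only [inner_conj_symm] using this
  set g : (Fin 2 → ℂ) →ₗ[ℂ] E :=
    (LinearMap.proj 0).smulRight u₁ + (LinearMap.proj 1).smulRight u₂ with hg
  set f : (Fin 2 → ℂ) →ₗ[ℂ] E :=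
    (LinearMap.proj 0).smulRight v₁ + (LinearMap.proj 1).smulRight v₂ with hf
  have key : ∀ c d : Fin 2 → ℂ, ⟪f c, f d⟫_ℂ = ⟪g c, g d⟫_ℂ := by
    intro c d
    simp only [hf, hg, LinearMap.add_apply, LinearMap.smulRight_apply, LinearMap.proj_apply,
      inner_add_left, inner_add_right, inner_smul_left, inner_smul_right, h11, h12, h21, h22]
  have hker : LinearMap.ker g ≤ LinearMap.ker f := by
    intro c hc
    rw [LinearMap.mem_ker] at hc ⊢
    have : ⟪f c, f c⟫_ℂ = 0 := by rw [key, hc, inner_zero_right]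
    exact inner_self_eq_zero.mp this
  set L : LinearMap.range g →ₗ[ℂ] E :=
    ((LinearMap.ker g).liftQ f hker).comp (g.quotKerEquivRange.symm : LinearMap.range g →ₗ[ℂ] _)
    with hL
  have hLapp : ∀ c : Fin 2 → ℂ, L ⟨g c, LinearMap.mem_range_self g c⟩ = f c := by
    intro c
    have h1 : g.quotKerEquivRange.symm ⟨g c, LinearMap.mem_range_self g c⟩
        = Submodule.Quotient.mk c := by
      rw [LinearEquiv.symm_apply_eq]
      exact Subtype.ext (g.quotKerEquivRange_apply_mk c).symm
    rw [hL, LinearMap.comp_apply, LinearEquiv.coe_coe, h1, Submodule.liftQ_apply]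
  have hnorm : ∀ s : LinearMap.range g, ‖L s‖ = ‖s‖ := by
    rintro ⟨s, hs⟩
    obtain ⟨c, rfl⟩ := hs
    rw [hLapp c]
    have h3 : ‖f c‖ ^ 2 = ‖g c‖ ^ 2 := by
      have := key c c
      rw [inner_self_eq_norm_sq_to_K, inner_self_eq_norm_sq_to_K] at this
      exact_mod_cast this
    have h4 : ‖f c‖ = ‖g c‖ := by
      nlinarith [norm_nonneg (f c), norm_nonneg (g c)]
    simpa [Submodule.coe_norm] using h4
  set LI : LinearMap.range g →ₗᵢ[ℂ] E := ⟨L, hnorm⟩ with hLI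
  have main : ∀ (c : Fin 2 → ℂ) (u : E), g c = u → LI.extend u = f c := by
    intro c u hc
    have hm : u ∈ LinearMap.range g := ⟨c, hc⟩
    have e1 : (⟨u, hm⟩ : LinearMap.range g) = ⟨g c, LinearMap.mem_range_self g c⟩ :=
      Subtype.ext hc.symm
    have h2 := LI.extend_apply ⟨u, hm⟩
    rw [h2]
    show L ⟨u, hm⟩ = f c
    rw [e1, hLapp]
  refine ⟨LI.extend, ?_, ?_⟩
  · have := main ![1, 0] u₁ (by simp [hg])
    rw [this]; simp [hf]
  · have := main ![0, 1] u₂ (by simp [hg])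
    rw [this]; simp [hf]

lemma toEuclideanLin_mul {n : ℕ} (M N : Matrix (Fin n) (Fin n) ℂ) :
    Matrix.toEuclideanLin (M * N)
      = (Matrix.toEuclideanLin M).comp (Matrix.toEuclideanLin N) := by
  simp only [Matrix.toEuclideanLin_eq_toLin]
  exact Matrix.toLin_mul _ _ _ M N

lemma toEuclideanLin_one {n : ℕ} :
    Matrix.toEuclideanLin (1 : Matrix (Fin n) (Fin n) ℂ) = LinearMap.id := by
  simp only [Matrix.toEuclideanLin_eq_toLin]
  exact Matrix.toLin_one _

/-- If DW⁻¹(A) ∩ DW(−B) ≠ ∅, then I + AU*BU is singular for some unitary U. -/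
theorem stmt9 {n : ℕ} (A B : Matrix (Fin n) (Fin n) ℂ)
    (h : (invDwShell A ∩ dwShell (-B)).Nonempty) :
    ∃ U : Matrix (Fin n) (Fin n) ℂ, Uᴴ * U = 1 ∧ ¬ IsUnit (1 + A * Uᴴ * B * U) := by
  classical
  obtain ⟨p, hp1, hp2⟩ := h
  obtain ⟨q, ⟨hq1, hq0⟩, hpq⟩ := hp1
  obtain ⟨x, hx, hqdef⟩ := hq1
  obtain ⟨y, hy, hpdef⟩ := hp2
  set aL : EuclideanSpace ℂ (Fin n) := Matrix.toEuclideanLin A x with haL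
  set bL : EuclideanSpace ℂ (Fin n) := Matrix.toEuclideanLin B y with hbL
  have hBneg : Matrix.toEuclideanLin (-B) y = -bL := by
    rw [map_neg, LinearMap.neg_apply, hbL]
  have haLne : aL ≠ 0 := by
    intro h0
    apply hq0
    rw [hqdef, h0]
    simp
  set α : ℝ := ‖aL‖ with hα
  have hαpos : 0 < α := norm_pos_iff.mpr haLne
  have hαC : (α : ℂ) ≠ 0 := by exact_mod_cast hαpos.ne'
  -- the two defining equations
  have hfq : finv q = ((inner ℂ y (-bL : EuclideanSpace ℂ (Fin n)) : ℂ), ‖(-bL : EuclideanSpace ℂ (Fin n))‖ ^ 2) := by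
    rw [hpq, hpdef, hBneg]
  have E1 : (starRingEnd ℂ) (inner ℂ x aL : ℂ) / ((α ^ 2 : ℝ) : ℂ)
      = -(inner ℂ y bL : ℂ) := by
    have := congrArg Prod.fst hfq
    simpa [finv, hqdef, inner_neg_right] using this
  have E2 : 1 / (α ^ 2) = ‖bL‖ ^ 2 := by
    have := congrArg Prod.snd hfq
    simpa [finv, hqdef] using this
  -- Gram-matched pairs
  set u₁ : EuclideanSpace ℂ (Fin n) := ((α : ℂ))⁻¹ • aL with hu₁
  set v₂ : EuclideanSpace ℂ (Fin n) := -(((α : ℂ)) • bL) with hv₂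
  open scoped InnerProductSpace in
  have h11 : ⟪y, y⟫_ℂ = ⟪u₁, u₁⟫_ℂ := by
    rw [hu₁, inner_smul_left, inner_smul_right, inner_self_eq_norm_sq_to_K,
      inner_self_eq_norm_sq_to_K, hy, ← hα, map_inv₀, Complex.conj_ofReal]
    field_simp
    simp
  open scoped InnerProductSpace in
  have h22 : ⟪v₂, v₂⟫_ℂ = ⟪x, x⟫_ℂ := by
    rw [hv₂, inner_neg_neg, inner_smul_left, inner_smul_right, inner_self_eq_norm_sq_to_K,
      inner_self_eq_norm_sq_to_K, hx, Complex.conj_ofReal]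
    have h1 : ‖bL‖ ^ 2 = (α⁻¹) ^ 2 := by
      rw [← E2]; field_simp
    have hbn : ‖bL‖ = α⁻¹ := by
      calc ‖bL‖ = Real.sqrt (‖bL‖ ^ 2) := (Real.sqrt_sq (norm_nonneg _)).symm
        _ = Real.sqrt ((α⁻¹) ^ 2) := by rw [h1]
        _ = α⁻¹ := Real.sqrt_sq (by positivity)
    rw [hbn]
    push_cast
    field_simp
    exact div_self (pow_ne_zero 2 hαC)
  open scoped InnerProductSpace in
  have h12 : ⟪y, v₂⟫_ℂ = ⟪u₁, x⟫_ℂ := by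
    rw [hv₂, hu₁, inner_neg_right, inner_smul_right, inner_smul_left, map_inv₀,
      Complex.conj_ofReal]
    have hconj : (starRingEnd ℂ) (inner ℂ x aL : ℂ) = -(inner ℂ y bL : ℂ) * ((α ^ 2 : ℝ) : ℂ) := by
      have h2 : ((α ^ 2 : ℝ) : ℂ) ≠ 0 := by
        push_cast; exact pow_ne_zero 2 hαC
      rw [div_eq_iff h2] at E1
      rw [E1]
    have hsym : (inner ℂ aL x : ℂ) = (starRingEnd ℂ) (inner ℂ x aL : ℂ) := (inner_conj_symm _ _).symm
    rw [hsym, hconj]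
    push_cast
    rw [pow_two]
    field_simp
  obtain ⟨UL, hU1, hU2⟩ := gram_extend u₁ x y v₂ h11 h12 h22
  set U : Matrix (Fin n) (Fin n) ℂ := Matrix.toEuclideanLin.symm UL.toLinearMap with hUdef
  have hU : Matrix.toEuclideanLin U = UL.toLinearMap := by
    rw [hUdef]; exact LinearEquiv.apply_symm_apply _ _
  have hadj : ∀ z, LinearMap.adjoint UL.toLinearMap (UL z) = z := by
    intro z
    apply ext_inner_left ℂ
    intro w
    rw [LinearMap.adjoint_inner_right]
    exact UL.inner_map_map w z
  have hUU : Uᴴ * U = 1 := by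
    apply (Matrix.toEuclideanLin (𝕜 := ℂ) (m := Fin n) (n := Fin n)).injective
    rw [toEuclideanLin_mul, Matrix.toEuclideanLin_conjTranspose_eq_adjoint, hU,
      toEuclideanLin_one]
    apply LinearMap.ext
    intro z
    simp only [LinearMap.comp_apply, LinearMap.id_apply, LinearIsometry.coe_toLinearMap]
    exact hadj z
  refine ⟨U, hUU, ?_⟩
  -- the kernel vector
  have s1 : Matrix.toEuclideanLin U aL = (α : ℂ) • y := by
    rw [hU]
    have h1 : (α : ℂ) • u₁ = aL := smul_inv_smul₀ hαC aL
    show UL aL = (α : ℂ) • y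
    rw [← h1, UL.map_smul, hU1]
  have s3 : Matrix.toEuclideanLin Uᴴ ((α : ℂ) • bL) = -x := by
    rw [Matrix.toEuclideanLin_conjTranspose_eq_adjoint, hU]
    have hb : ((α : ℂ) • bL) = -(UL x) := by rw [hU2, hv₂, neg_neg]
    rw [hb, map_neg]
    rw [hadj x]
  have hkill : Matrix.toEuclideanLin (1 + A * Uᴴ * B * U) aL = 0 := by
    rw [map_add, LinearMap.add_apply, toEuclideanLin_one, toEuclideanLin_mul,
      toEuclideanLin_mul, toEuclideanLin_mul]
    simp only [LinearMap.comp_apply, LinearMap.id_apply]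
    rw [s1, (Matrix.toEuclideanLin B).map_smul, ← hbL, s3, (Matrix.toEuclideanLin A).map_neg,
      ← haL]
    abel
  have hv : (1 + A * Uᴴ * B * U) *ᵥ (WithLp.equiv 2 (Fin n → ℂ) aL) = 0 := by
    have h0 := hkill
    rw [Matrix.toEuclideanLin_apply] at h0
    have := congrArg (WithLp.equiv 2 (Fin n → ℂ)) h0
    simpa using this
  have hvne : (WithLp.equiv 2 (Fin n → ℂ)) aL ≠ 0 := by
    intro h0
    apply haLne
    have := congrArg (WithLp.equiv 2 (Fin n → ℂ)).symm h0
    simpa using this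
  have hdet : (1 + A * Uᴴ * B * U).det = 0 :=
    Matrix.exists_mulVec_eq_zero_iff.mp ⟨_, hvne, hv⟩
  intro hu
  have := (Matrix.isUnit_iff_isUnit_det _).mp hu
  rw [hdet] at this
  exact this.ne_zero rfl
end
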